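/- Let a ≠ -1 be a non-square integer, let h_a be the largest m ∈ ℕ such that a is an m-th power, and let k be a positive squarefree integer. Set k' = k / gcd(k, h_a). Then a^{1/k} lies in the field ℚ(a^{1/k'}, ζ_k), i.e., ℚ(a^{1/k}, ζ_k) = ℚ(a^{1/k'}, ζ_k). -/
import Mathlib


/-- Let `a ≠ -1` be a non-square integer, `h` the largest natural number such that `a`
is an `h`-th power, `k` a positive squarefree integer, and `k' = k / gcd(k, h)`.
Then for any primitive `k`-th root of unity `ζ` and any complex `k`-th root `α` and
`k'`-th root `β` of `a`, we have `ℚ(α, ζ) = ℚ(β, ζ)`, i.e. `a^{1/k}` lies in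
`ℚ(a^{1/k'}, ζ_k)`. -/
theorem stmt_1 (a : ℤ) (ha : a ≠ -1) (hsq : ¬ IsSquare a)
    (h : ℕ) (hpow : ∃ b : ℤ, b ^ h = a) (hmax : ∀ m : ℕ, (∃ b : ℤ, b ^ m = a) → m ≤ h)
    (k : ℕ) (hk : 0 < k) (hksf : Squarefree k)
    (k' : ℕ) (hk' : k' = k / Nat.gcd k h)
    (ζ α β : ℂ) (hζ : IsPrimitiveRoot ζ k)
    (hα : α ^ k = (a : ℂ)) (hβ : β ^ k' = (a : ℂ)) :
    IntermediateField.adjoin ℚ {α, ζ} = IntermediateField.adjoin ℚ {β, ζ} := by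
  haveI : NeZero k := ⟨hk.ne'⟩
  have ha0 : a ≠ 0 := by rintro rfl; exact hsq ⟨0, by ring⟩
  have haC0 : (a : ℂ) ≠ 0 := by exact_mod_cast ha0
  have h1 : 1 ≤ h := hmax 1 ⟨a, pow_one a⟩
  obtain ⟨b, hb⟩ := hpow
  have hb0 : b ≠ 0 := by
    rintro rfl
    rw [zero_pow (by omega)] at hb
    exact ha0 hb.symm
  have hbC0 : (b : ℂ) ≠ 0 := by exact_mod_cast hb0
  set d := Nat.gcd k h with hd
  have hdk : d ∣ k := Nat.gcd_dvd_left k h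
  have hdh : d ∣ h := Nat.gcd_dvd_right k h
  have hkk' : k = d * k' := by rw [hk']; exact (Nat.mul_div_cancel' hdk).symm
  have hd0 : 0 < d := Nat.gcd_pos_of_pos_left _ hk
  have hk'0 : 0 < k' := by
    rcases Nat.eq_zero_or_pos k' with h0 | h0
    · rw [h0, mul_zero] at hkk'; omega
    · exact h0
  have hα0 : α ≠ 0 := by
    intro h0; rw [h0, zero_pow hk.ne'] at hα; exact haC0 hα.symm
  have hβ0 : β ≠ 0 := by
    intro h0; rw [h0, zero_pow hk'0.ne'] at hβ; exact haC0 hβ.symm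
  -- coprimality facts
  have hcop : Nat.Coprime d k' := by
    rw [hkk'] at hksf
    exact (Nat.squarefree_mul_iff.mp hksf).1
  have hcop2 : Nat.Coprime h k' := by
    have h1' : Nat.gcd k' h ∣ d := by
      refine Nat.dvd_gcd ?_ (Nat.gcd_dvd_right _ _)
      exact (Nat.gcd_dvd_left k' h).trans ⟨d, by rw [hkk']; ring⟩
    have h2' : Nat.gcd k' h ∣ Nat.gcd d k' := Nat.dvd_gcd h1' (Nat.gcd_dvd_left _ _)
    have h3' : Nat.gcd k' h ∣ 1 := h2'.trans (dvd_of_eq hcop)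
    exact Nat.Coprime.symm (Nat.eq_one_of_dvd_one h3')
  have hgcd : Nat.gcd (h * d) k = d := by
    rw [hkk', mul_comm h d, Nat.gcd_mul_left, hcop2, mul_one]
  -- Bezout: h*d*x + k*y = h
  obtain ⟨x, y, hxy⟩ : ∃ x y : ℤ, (h * d : ℤ) * x + (k : ℤ) * y = (h : ℤ) := by
    obtain ⟨e, he⟩ := hdh
    refine ⟨Int.gcdA (h * d) k * e, Int.gcdB (h * d) k * e, ?_⟩
    have hg : ((h * d : ℕ).gcd k : ℤ) = (h * d : ℤ) * Int.gcdA (h * d) k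
        + (k : ℤ) * Int.gcdB (h * d) k := by
      exact_mod_cast Int.gcd_eq_gcd_ab (h * d : ℕ) (k : ℕ)
    rw [hgcd] at hg
    have hde : (h : ℤ) = (d : ℤ) * e := by exact_mod_cast he
    calc (h * d : ℤ) * (Int.gcdA (h * d) k * e) + (k : ℤ) * (Int.gcdB (h * d) k * e)
        = ((h * d : ℤ) * Int.gcdA (h * d) k + (k : ℤ) * Int.gcdB (h * d) k) * e := by ring
      _ = (d : ℤ) * e := by rw [← hg]
      _ = (h : ℤ) := hde.symm
  -- key power computations
  have hβk : β ^ k = (b : ℂ) ^ (h * d) := by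
    rw [hkk', mul_comm d k', pow_mul, hβ, pow_mul]
    congr 1
    rw [← hb]; push_cast; ring
  have hβm : β ∈ IntermediateField.adjoin ℚ {β, ζ} :=
    IntermediateField.subset_adjoin ℚ _ (Or.inl rfl)
  have hζm : ζ ∈ IntermediateField.adjoin ℚ {β, ζ} :=
    IntermediateField.subset_adjoin ℚ _ (Or.inr rfl)
  have hαm' : α ∈ IntermediateField.adjoin ℚ {α, ζ} :=
    IntermediateField.subset_adjoin ℚ _ (Or.inl rfl)
  have hζm' : ζ ∈ IntermediateField.adjoin ℚ {α, ζ} :=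
    IntermediateField.subset_adjoin ℚ _ (Or.inr rfl)
  apply le_antisymm
  · -- α ∈ ℚ(β, ζ)
    set γ : ℂ := (b : ℂ) ^ y * β ^ x with hγ
    have hγ0 : γ ≠ 0 := mul_ne_zero (zpow_ne_zero _ hbC0) (zpow_ne_zero _ hβ0)
    have hβzk : β ^ (k : ℤ) = (b : ℂ) ^ ((h : ℤ) * d) := by
      rw [zpow_natCast, hβk, ← zpow_natCast (b : ℂ) (h * d)]
      push_cast
      ring_nf
    have e1 : ((b : ℂ) ^ y) ^ (k : ℤ) = (b : ℂ) ^ (y * (k : ℤ)) := (zpow_mul _ y (k : ℤ)).symm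
    have e2 : (β ^ x) ^ (k : ℤ) = (b : ℂ) ^ ((h : ℤ) * d * x) := by
      rw [← zpow_mul, mul_comm x (k : ℤ), zpow_mul, hβzk, ← zpow_mul]
    have hγk : γ ^ (k : ℤ) = α ^ (k : ℤ) := by
      rw [hγ, mul_zpow, e1, e2, ← zpow_add₀ hbC0,
        show y * (k : ℤ) + (h : ℤ) * d * x = (h : ℤ) by linarith [hxy],
        zpow_natCast α k, hα, ← hb, zpow_natCast]
      push_cast
      ring
    have hratio : (α / γ) ^ k = 1 := by
      rw [div_pow, ← zpow_natCast α k, ← zpow_natCast γ k, hγk, div_self]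
      exact zpow_ne_zero _ hα0
    obtain ⟨i, _, hi⟩ := hζ.eq_pow_of_pow_eq_one hratio
    have hαeq : α = ζ ^ i * γ := ((eq_div_iff hγ0).mp hi).symm
    have hbm : (b : ℂ) ∈ IntermediateField.adjoin ℚ {β, ζ} := intCast_mem _ b
    rw [IntermediateField.adjoin_le_iff]
    rintro z (rfl | rfl)
    · rw [hαeq]
      exact mul_mem (pow_mem hζm i) (mul_mem (zpow_mem hbm y) (zpow_mem hβm x))
    · exact hζm
  · -- β ∈ ℚ(α, ζ)
    have hratio : (β / α ^ d) ^ k = 1 := by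
      rw [div_pow, ← pow_mul, mul_comm d k, pow_mul, hα, hβk]
      rw [show ((a : ℂ)) ^ d = (b : ℂ) ^ (h * d) by rw [← hb]; push_cast; rw [← pow_mul]]
      exact div_self (pow_ne_zero _ hbC0)
    obtain ⟨j, _, hj⟩ := hζ.eq_pow_of_pow_eq_one hratio
    have hβeq : β = ζ ^ j * α ^ d := ((eq_div_iff (pow_ne_zero _ hα0)).mp hj).symm
    rw [IntermediateField.adjoin_le_iff]
    rintro z (rfl | rfl)
    · rw [hβeq]
      exact mul_mem (pow_mem hζm' j) (pow_mem hαm' d)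
    · exact hζm'
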